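/- There exists a constant C > 0 such that for all natural numbers h, the sum ∑_{k=0}^{h} (h choose k) · S k is at most C · (4 + √8)^{h+1} / (h+1)^{3/2}, where S is the sequence of super Catalan (little Schröder) numbers. -/

import Mathlib

open Finset

lemma choose_conv (k l n : ℕ) :
    ∑ i ∈ range (n + 1), i.choose k * (n - i).choose l = (n + 1).choose (k + l + 1) := by
  induction n generalizing l with
  | zero =>
    rw [sum_range_one]
    simp only [Nat.zero_sub]
    cases k with
    | zero =>
      cases l with
      | zero => simp
      | succ l =>
        rw [Nat.choose_eq_zero_of_lt (show 1 < 0 + (l+1) + 1 by omega)]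
        simp
    | succ k =>
      rw [Nat.choose_eq_zero_of_lt (show 0 < k + 1 by omega),
        Nat.choose_eq_zero_of_lt (show 1 < k + 1 + l + 1 by omega)]
      simp
  | succ n ih =>
    rw [sum_range_succ]
    cases l with
    | zero =>
      have h1 : ∑ i ∈ range (n + 1), i.choose k * (n + 1 - i).choose 0
          = ∑ i ∈ range (n + 1), i.choose k * (n - i).choose 0 := by
        apply sum_congr rfl; intro i _; simp
      rw [h1, ih 0, Nat.sub_self]
      simp only [Nat.choose_zero_right, Nat.mul_one]
      rw [Nat.choose_succ_succ (n+1) (k+0)]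
      have : k + 0 = k := by ring
      rw [this]; ring
    | succ l =>
      have h1 : ∑ i ∈ range (n + 1), i.choose k * (n + 1 - i).choose (l + 1)
          = ∑ i ∈ range (n + 1), (i.choose k * (n - i).choose (l + 1)
              + i.choose k * (n - i).choose l) := by
        apply sum_congr rfl; intro i hi
        have hi' : i ≤ n := Nat.lt_succ_iff.mp (mem_range.mp hi)
        have h2 : n + 1 - i = (n - i) + 1 := by omega
        rw [h2, Nat.choose_succ_succ, Nat.mul_add]
        simp only [Nat.succ_eq_add_one]
        ring
      rw [h1, sum_add_distrib, ih (l+1), ih l, Nat.sub_self]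
      rw [Nat.choose_zero_succ, Nat.mul_zero, Nat.add_zero]
      have h3 : k + (l + 1) + 1 = (k + l + 1) + 1 := by ring
      rw [h3, Nat.choose_succ_succ (n+1) (k+l+1)]
      ring

/-- Binomial transform of `S`. -/
def bt (S : ℕ → ℕ) (h : ℕ) : ℕ := ∑ k ∈ range (h + 1), h.choose k * S k

lemma bt_extend (S : ℕ → ℕ) {i n : ℕ} (hi : i ≤ n) :
    bt S i = ∑ k ∈ range (n + 1), i.choose k * S k := by
  unfold bt
  apply sum_subset (by intro x hx; simp at hx ⊢; omega)
  intro x _ hx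
  simp only [mem_range, not_lt] at hx
  rw [Nat.choose_eq_zero_of_lt (by omega), Nat.zero_mul]

lemma conv_bt (S : ℕ → ℕ) (n : ℕ) :
    ∑ i ∈ range (n + 1), bt S i * bt S (n - i)
      = ∑ m ∈ range (n + 1), (n + 1).choose (m + 1)
          * ∑ i ∈ range (m + 1), S i * S (m - i) := by
  have step1 : ∑ i ∈ range (n + 1), bt S i * bt S (n - i)
      = ∑ k ∈ range (n + 1), ∑ l ∈ range (n + 1),
          (S k * S l) * ∑ i ∈ range (n + 1), i.choose k * (n - i).choose l := by
    have e1 : ∑ i ∈ range (n + 1), bt S i * bt S (n - i)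
        = ∑ i ∈ range (n + 1), ∑ k ∈ range (n + 1), ∑ l ∈ range (n + 1),
            (i.choose k * S k) * ((n - i).choose l * S l) := by
      apply sum_congr rfl
      intro i hi
      have hi' : i ≤ n := Nat.lt_succ_iff.mp (mem_range.mp hi)
      rw [bt_extend S hi', bt_extend S (Nat.sub_le n i), Finset.sum_mul_sum]
    rw [e1, Finset.sum_comm]
    apply sum_congr rfl
    intro k _
    rw [Finset.sum_comm]
    apply sum_congr rfl
    intro l _
    rw [Finset.mul_sum]
    apply sum_congr rfl
    intro i _
    ring
  rw [step1]
  have step2 : ∀ k ∈ range (n + 1), ∑ l ∈ range (n + 1),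
        (S k * S l) * ∑ i ∈ range (n + 1), i.choose k * (n - i).choose l
      = ∑ l ∈ range (n + 1 - k), (S k * S l) * (n + 1).choose (k + l + 1) := by
    intro k hk
    rw [Finset.sum_congr rfl (fun l _ => by rw [choose_conv k l n])]
    symm
    apply sum_subset (by intro x hx; simp at hx ⊢; omega)
    intro l hl hl'
    simp only [mem_range, not_lt] at hl'
    rw [Nat.choose_eq_zero_of_lt (by omega), Nat.mul_zero]
  rw [Finset.sum_congr rfl step2]
  rw [← Finset.sum_range_diag_flip (n + 1) (fun k l => (S k * S l) * (n + 1).choose (k + l + 1))]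
  apply sum_congr rfl
  intro m hm
  rw [Finset.mul_sum]
  apply sum_congr rfl
  intro k hk
  have hk' : k ≤ m := Nat.lt_succ_iff.mp (mem_range.mp hk)
  have : k + (m - k) + 1 = m + 1 := by omega
  rw [this]; ring

/-- `Vn S n` : first difference of the binomial transform. -/
def Vn (S : ℕ → ℕ) : ℕ → ℕ
  | 0 => 1
  | n + 1 => ∑ j ∈ range (n + 1), n.choose j * S (j + 1)

lemma bt_succ (S : ℕ → ℕ) (hS0 : S 0 = 1) (n : ℕ) :
    bt S (n + 1) = bt S n + Vn S (n + 1) := by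
  have e1 : bt S (n + 1)
      = (∑ k ∈ range (n + 1), (n + 1).choose (k + 1) * S (k + 1)) + S 0 := by
    unfold bt
    rw [Finset.sum_range_succ']
    simp
  have e2 : bt S n = (∑ k ∈ range n, n.choose (k + 1) * S (k + 1)) + S 0 := by
    unfold bt
    rw [Finset.sum_range_succ']
    simp
  have e3 : ∑ k ∈ range (n + 1), n.choose (k + 1) * S (k + 1)
      = ∑ k ∈ range n, n.choose (k + 1) * S (k + 1) := by
    rw [Finset.sum_range_succ, Nat.choose_eq_zero_of_lt (by omega), Nat.zero_mul, Nat.add_zero]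
  have e4 : ∀ k, (n + 1).choose (k + 1) * S (k + 1)
      = n.choose k * S (k + 1) + n.choose (k + 1) * S (k + 1) := by
    intro k
    rw [Nat.choose_succ_succ, Nat.add_mul]
  rw [e1, Finset.sum_congr rfl (fun k _ => e4 k), Finset.sum_add_distrib, e3, e2]
  show _ + _ + _ = _ + _ + Vn S (n + 1)
  unfold Vn
  ring

lemma key_bt (S : ℕ → ℕ) (hS0 : S 0 = 1)
    (hSrec : ∀ n, S (n + 1) + S n = 2 * ∑ i ∈ range (n + 1), S i * S (n - i)) (n : ℕ) :
    bt S (n + 1) + 2 * ∑ i ∈ range n, bt S i * bt S (n - 1 - i)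
      = 2 * ∑ i ∈ range (n + 1), bt S i * bt S (n - i) := by
  have hrhs : 2 * ∑ i ∈ range (n + 1), bt S i * bt S (n - i)
      = ∑ m ∈ range (n + 1), (n + 1).choose (m + 1)
          * (S (m + 1) + S m) := by
    rw [conv_bt, Finset.mul_sum]
    apply sum_congr rfl
    intro m _
    rw [hSrec m]
    ring
  have hsplit : ∀ m, (n + 1).choose (m + 1) * (S (m + 1) + S m)
      = n.choose m * S (m + 1) + n.choose m * S m
        + n.choose (m + 1) * (S (m + 1) + S m) := by
    intro m
    rw [Nat.choose_succ_succ, Nat.add_mul]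
    ring
  rw [hrhs, Finset.sum_congr rfl (fun m _ => hsplit m), Finset.sum_add_distrib,
    Finset.sum_add_distrib]
  have h1 : ∑ m ∈ range (n + 1), n.choose m * S (m + 1) = Vn S (n + 1) := rfl
  have h2 : ∑ m ∈ range (n + 1), n.choose m * S m = bt S n := rfl
  have h3 : ∑ m ∈ range (n + 1), n.choose (m + 1) * (S (m + 1) + S m)
      = 2 * ∑ i ∈ range n, bt S i * bt S (n - 1 - i) := by
    rw [Finset.sum_range_succ, Nat.choose_eq_zero_of_lt (by omega), Nat.zero_mul, Nat.add_zero]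
    cases n with
    | zero => simp
    | succ n' =>
      have := conv_bt S n'
      have e : n' + 1 - 1 = n' := rfl
      rw [e]
      rw [conv_bt S n', Finset.mul_sum]
      apply sum_congr rfl
      intro m _
      rw [hSrec m]
      ring
  rw [h1, h2, h3, bt_succ S hS0 n]
  ring

noncomputable section

variable (S : ℕ → ℕ)

/-- real binomial transform -/
def TT (n : ℕ) : ℝ := (bt S n : ℝ)

/-- shifted real binomial transform -/
def Tm : ℕ → ℝ
  | 0 => 0
  | n + 1 => TT S n

/-- real difference sequence -/
def Vr (n : ℕ) : ℝ := (Vn S n : ℝ)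

lemma shift1 (f : ℕ → ℝ) (n : ℕ) :
    ∑ i ∈ range (n + 1), Tm S i * f (n - i) = ∑ i ∈ range n, TT S i * f (n - 1 - i) := by
  rw [Finset.sum_range_succ']
  simp only [Tm, add_zero]
  rw [zero_mul, add_zero]
  apply sum_congr rfl
  intro i _
  have : n - (i + 1) = n - 1 - i := by omega
  rw [this]

lemma refl1 (f g : ℕ → ℝ) (n : ℕ) :
    ∑ i ∈ range (n + 1), f i * g (n - i) = ∑ i ∈ range (n + 1), g i * f (n - i) := by
  rw [← Finset.sum_range_reflect]
  apply sum_congr rfl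
  intro i hi
  have hi' : i ≤ n := Nat.lt_succ_iff.mp (mem_range.mp hi)
  have e1 : n + 1 - 1 - i = n - i := by omega
  have e2 : n - (n - i) = i := by omega
  rw [e1, e2]
  ring

lemma hVTm (hS0 : S 0 = 1) : ∀ i, Vr S i = TT S i - Tm S i := by
  intro i
  cases i with
  | zero =>
    simp [Vr, TT, Tm, Vn, bt, hS0]
  | succ n =>
    have := bt_succ S hS0 n
    simp only [Vr, TT, Tm]
    have h2 : ((bt S (n+1) : ℕ) : ℝ) = ((bt S n + Vn S (n+1) : ℕ) : ℝ) := by rw [this]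
    push_cast at h2
    rw [h2]; ring

lemma keyTT (hS0 : S 0 = 1)
    (hSrec : ∀ n, S (n + 1) + S n = 2 * ∑ i ∈ range (n + 1), S i * S (n - i)) (n : ℕ) :
    TT S (n + 1) + 2 * ∑ i ∈ range n, TT S i * TT S (n - 1 - i)
      = 2 * ∑ i ∈ range (n + 1), TT S i * TT S (n - i) := by
  have := key_bt S hS0 hSrec n
  have h := congrArg (fun x : ℕ => (x : ℝ)) this
  push_cast at h
  simpa [TT] using h

lemma Vrec (hS0 : S 0 = 1)
    (hSrec : ∀ n, S (n + 1) + S n = 2 * ∑ i ∈ range (n + 1), S i * S (n - i)) (n : ℕ) :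
    Vr S (n + 2) = 2 * ∑ i ∈ range (n + 2), Vr S i * Vr S (n + 1 - i) := by
  set A := ∑ i ∈ range (n + 1), TT S i * TT S (n - i) with hA
  set B := ∑ i ∈ range n, TT S i * TT S (n - 1 - i) with hB
  have key1 : TT S (n + 2) + 2 * ∑ i ∈ range (n+1), TT S i * TT S (n + 1 - 1 - i)
      = 2 * ∑ i ∈ range (n + 2), TT S i * TT S (n + 1 - i) := keyTT S hS0 hSrec (n+1)
  have eA : ∑ i ∈ range (n+1), TT S i * TT S (n + 1 - 1 - i) = A := by
    apply sum_congr rfl; intro i _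
    have : n + 1 - 1 - i = n - i := by omega
    rw [this]
  rw [eA] at key1
  have key0 : TT S (n + 1) + 2 * B = 2 * A := keyTT S hS0 hSrec n
  -- expand conv of V
  have hconv : ∑ i ∈ range (n + 2), Vr S i * Vr S (n + 1 - i)
      = (∑ i ∈ range (n + 2), TT S i * TT S (n + 1 - i)) - 2 * A + B := by
    have expand : ∑ i ∈ range (n + 2), Vr S i * Vr S (n + 1 - i)
        = (∑ i ∈ range (n + 2), TT S i * TT S (n + 1 - i))
          - (∑ i ∈ range (n + 2), TT S i * Tm S (n + 1 - i))
          - (∑ i ∈ range (n + 2), Tm S i * TT S (n + 1 - i))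
          + (∑ i ∈ range (n + 2), Tm S i * Tm S (n + 1 - i)) := by
      rw [← Finset.sum_sub_distrib, ← Finset.sum_sub_distrib, ← Finset.sum_add_distrib]
      apply sum_congr rfl
      intro i _
      rw [hVTm S hS0 i, hVTm S hS0 (n + 1 - i)]
      ring
    have e1 : ∑ i ∈ range (n + 2), Tm S i * TT S (n + 1 - i) = A := by
      have := shift1 S (TT S) (n + 1)
      rw [this]
      apply sum_congr rfl; intro i _
      have : n + 1 - 1 - i = n - i := by omega
      rw [this]
    have e2 : ∑ i ∈ range (n + 2), TT S i * Tm S (n + 1 - i) = A := by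
      rw [refl1 (TT S) (Tm S) (n + 1)]
      exact e1
    have e3 : ∑ i ∈ range (n + 2), Tm S i * Tm S (n + 1 - i) = B := by
      rw [shift1 S (Tm S) (n + 1)]
      have step : ∑ i ∈ range (n+1), TT S i * Tm S (n + 1 - 1 - i)
          = ∑ i ∈ range (n+1), TT S i * Tm S (n - i) := by
        apply sum_congr rfl; intro i _
        have : n + 1 - 1 - i = n - i := by omega
        rw [this]
      rw [step, refl1 (TT S) (Tm S) n, shift1 S (TT S) n]
    rw [expand, e1, e2, e3]
    ring
  have hV2 : Vr S (n + 2) = TT S (n + 2) - TT S (n + 1) := by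
    rw [hVTm S hS0 (n + 2)]; rfl
  rw [hV2, hconv]
  linarith [key1, key0]

end

open PowerSeries in
lemma coeff_mul_range (f g : ℕ → ℝ) (n : ℕ) :
    (PowerSeries.coeff n) (PowerSeries.mk f * PowerSeries.mk g)
      = ∑ k ∈ range (n + 1), f k * g (n - k) := by
  rw [PowerSeries.coeff_mul, Finset.Nat.sum_antidiagonal_eq_sum_range_succ_mk]
  simp [PowerSeries.coeff_mk]

lemma catalan_succ_range (n : ℕ) :
    catalan (n + 1) = ∑ i ∈ range (n + 1), catalan i * catalan (n - i) := by
  rw [catalan_succ', Finset.Nat.sum_antidiagonal_eq_sum_range_succ_mk]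

/-- the formal square root of `1 - 4cX` -/
noncomputable def gse (c : ℝ) : PowerSeries ℝ :=
  PowerSeries.mk fun n => if n = 0 then 1 else (-2) * (catalan (n - 1) : ℝ) * c ^ n

open PowerSeries in
lemma gse_sq (c : ℝ) : (gse c) ^ 2 = 1 - PowerSeries.C (4 * c) * X := by
  ext n
  rw [pow_two, gse, coeff_mul_range]
  rcases n with _ | n
  · simp
  rcases n with _ | n
  · norm_num [Finset.sum_range_succ]
    ring
  · -- n + 2 case
    rw [Finset.sum_range_succ, Finset.sum_range_succ']
    have e1 : ∀ i ∈ range (n + 1),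
        (if i + 1 = 0 then (1:ℝ) else (-2) * catalan (i + 1 - 1) * c ^ (i+1))
        * (if n + 1 + 1 - (i + 1) = 0 then (1:ℝ)
            else (-2) * catalan (n + 1 + 1 - (i+1) - 1) * c ^ (n + 1 + 1 - (i+1)))
        = 4 * ((catalan i : ℝ) * catalan (n - i)) * c ^ (n + 2) := by
      intro i hi
      have hi' : i < n + 1 := mem_range.mp hi
      rw [if_neg (by omega), if_neg (by omega)]
      have e2 : n + 1 + 1 - (i + 1) - 1 = n - i := by omega
      have e3 : c ^ (i + 1) * c ^ (n + 1 + 1 - (i + 1)) = c ^ (n + 2) := by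
        rw [← pow_add]; congr 1; omega
      rw [e2]
      calc (-2) * (catalan i : ℝ) * c ^ (i+1)
            * ((-2) * (catalan (n-i) : ℝ) * c ^ (n + 1 + 1 - (i+1)))
          = 4 * ((catalan i : ℝ) * catalan (n - i))
            * (c ^ (i+1) * c ^ (n + 1 + 1 - (i+1))) := by ring
        _ = 4 * ((catalan i : ℝ) * catalan (n - i)) * c ^ (n + 2) := by rw [e3]
    rw [Finset.sum_congr rfl e1, ← Finset.sum_mul, ← Finset.mul_sum]
    have e5 : ∑ i ∈ range (n + 1), (catalan i : ℝ) * (catalan (n - i) : ℝ)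
        = (catalan (n + 1) : ℝ) := by
      rw [catalan_succ_range n]
      push_cast
      rfl
    rw [e5]
    have hnz1 : n + 1 + 1 - (n + 2) = 0 := by omega
    have hnz2 : n + 2 - 1 = n + 1 := by omega
    rw [if_neg (Nat.succ_ne_zero (n+1)), if_pos rfl, if_pos hnz1, hnz2]
    have hco : (PowerSeries.coeff (n + 1 + 1)) (1 - (PowerSeries.C) (4 * c) * X) = 0 := by
      simp [PowerSeries.coeff_one, PowerSeries.coeff_C_mul, PowerSeries.coeff_X]
    rw [hco]
    have : n + 1 + 1 - 0 = n + 2 := rfl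
    rw [this]
    have : n + 2 - 1 = n + 1 := rfl
    rw [this]
    ring_nf
    rw [if_neg (show ¬(2 + n = 0) by omega)]
    ring

open PowerSeries in
lemma Vr_le (S : ℕ → ℕ) (hS0 : S 0 = 1)
    (hSrec : ∀ n, S (n + 1) + S n = 2 * ∑ i ∈ range (n + 1), S i * S (n - i)) :
    ∀ n : ℕ, Vr S n ≤ (catalan n : ℝ) * ((4 + Real.sqrt 8) / 4) ^ (n + 1) := by
  have hs8 : Real.sqrt 8 ^ 2 = 8 := Real.sq_sqrt (by norm_num)
  have hs8nn : (0:ℝ) ≤ Real.sqrt 8 := Real.sqrt_nonneg 8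
  have hs8le : Real.sqrt 8 ≤ 4 := by
    nlinarith [hs8, hs8nn]
  set a : ℝ := (4 + Real.sqrt 8) / 4 with ha
  set b : ℝ := (4 - Real.sqrt 8) / 4 with hb
  have hbnn : 0 ≤ b := by rw [hb]; linarith
  have hba : b ≤ a := by rw [ha, hb]; linarith
  have hS1 : S 1 = 1 := by
    have := hSrec 0
    simp [sum_range_one, hS0] at this
    omega
  have hV0 : Vr S 0 = 1 := by simp [Vr, Vn]
  have hV1 : Vr S 1 = 1 := by simp [Vr, Vn, sum_range_one, hS1]
  -- the power series v
  set v : PowerSeries ℝ := PowerSeries.mk (Vr S) with hv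
  have hveq : v + X = 1 + 2 * (X * v ^ 2) := by
    ext n
    rcases n with _ | n
    · simp [hv, PowerSeries.coeff_mk, hV0, PowerSeries.coeff_one]
    rcases n with _ | n
    · rw [map_add, map_add, PowerSeries.coeff_one, if_neg (Nat.one_ne_zero)]
      have h2 : (2 : PowerSeries ℝ) = PowerSeries.C 2 := (map_ofNat (PowerSeries.C) 2).symm
      rw [h2, PowerSeries.coeff_C_mul, PowerSeries.coeff_succ_X_mul]
      rw [pow_two, hv, coeff_mul_range]
      simp [PowerSeries.coeff_mk, PowerSeries.coeff_X, hV0, hV1]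
      norm_num
    · rw [map_add, map_add, PowerSeries.coeff_one, if_neg (by omega)]
      have h2 : (2 : PowerSeries ℝ) = PowerSeries.C 2 := (map_ofNat (PowerSeries.C) 2).symm
      rw [h2, PowerSeries.coeff_C_mul, PowerSeries.coeff_succ_X_mul]
      rw [pow_two, hv, coeff_mul_range]
      rw [PowerSeries.coeff_X, if_neg (by omega), PowerSeries.coeff_mk]
      rw [Vrec S hS0 hSrec n]
      ring
  -- u and w
  set u : PowerSeries ℝ := 1 - 4 * (X * v) with hu
  have husq : u ^ 2 = 1 - 8 * X + 8 * X ^ 2 := by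
    rw [hu]
    linear_combination (-8 * (X : PowerSeries ℝ)) * hveq
  set w : PowerSeries ℝ := gse a * gse b with hw
  have hab2 : a + b = 2 := by rw [ha, hb]; ring
  have habh : a * b = 1 / 2 := by
    rw [ha, hb]
    nlinarith [hs8]
  have hwsq : w ^ 2 = 1 - 8 * X + 8 * X ^ 2 := by
    have h1 : PowerSeries.C (4*a) * PowerSeries.C (4*b) = 8 := by
      rw [← map_mul]
      have : 4 * a * (4 * b) = 8 := by nlinarith [habh]
      rw [this]
      exact map_ofNat _ 8
    have h2 : PowerSeries.C (4*a) + PowerSeries.C (4*b) = 8 := by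
      rw [← map_add]
      have : 4 * a + (4 * b) = 8 := by linarith
      rw [this]
      exact map_ofNat _ 8
    calc w ^ 2 = (1 - PowerSeries.C (4*a) * X) * (1 - PowerSeries.C (4*b) * X) := by
          rw [hw, mul_pow, gse_sq, gse_sq]
      _ = 1 - (PowerSeries.C (4*a) + PowerSeries.C (4*b)) * X
            + (PowerSeries.C (4*a) * PowerSeries.C (4*b)) * X ^ 2 := by ring
      _ = 1 - 8 * X + 8 * X ^ 2 := by rw [h1, h2]
  have huw : u = w := by
    have hz : (u - w) * (u + w) = 0 := by
      have : u ^ 2 = w ^ 2 := by rw [husq, hwsq]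
      linear_combination this
    rcases mul_eq_zero.mp hz with h | h
    · exact sub_eq_zero.mp h
    · exfalso
      have hc := congrArg (PowerSeries.constantCoeff) h
      rw [map_add, map_zero] at hc
      have hcu : PowerSeries.constantCoeff u = 1 := by
        rw [hu]
        simp [PowerSeries.constantCoeff_X]
      have hcw : PowerSeries.constantCoeff w = 1 := by
        rw [hw, map_mul, gse, gse]
        rw [PowerSeries.constantCoeff_mk, PowerSeries.constantCoeff_mk]
        norm_num
      rw [hcu, hcw] at hc
      norm_num at hc
  intro n
  have hanna : (0:ℝ) ≤ a := le_trans hbnn hba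
  have hc := congrArg (PowerSeries.coeff (n+1)) huw
  rw [hu, hw] at hc
  rw [map_sub, PowerSeries.coeff_one, if_neg (Nat.succ_ne_zero n)] at hc
  have h4 : (4 : PowerSeries ℝ) = PowerSeries.C 4 := (map_ofNat (PowerSeries.C) 4).symm
  rw [h4, PowerSeries.coeff_C_mul, PowerSeries.coeff_succ_X_mul, hv, PowerSeries.coeff_mk] at hc
  rw [gse, gse, coeff_mul_range, Finset.sum_range_succ', Finset.sum_range_succ] at hc
  have e1 : ∀ k ∈ range n,
      (if k + 1 = 0 then (1:ℝ) else -2 * catalan (k + 1 - 1) * a ^ (k+1))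
      * (if n + 1 - (k + 1) = 0 then (1:ℝ)
          else -2 * catalan (n + 1 - (k+1) - 1) * b ^ (n + 1 - (k+1)))
      = 4 * ((catalan k : ℝ) * catalan (n - 1 - k)) * (a ^ (k+1) * b ^ (n - k)) := by
    intro k hk
    have hk' : k < n := mem_range.mp hk
    rw [if_neg (by omega), if_neg (by omega)]
    have e2 : n + 1 - (k + 1) - 1 = n - 1 - k := by omega
    have e3 : n + 1 - (k + 1) = n - k := by omega
    have e4 : k + 1 - 1 = k := by omega
    rw [e2, e3, e4]
    ring
  rw [Finset.sum_congr rfl e1] at hc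
  have e5 : (if n + 1 = 0 then (1:ℝ) else -2 * catalan (n + 1 - 1) * a ^ (n+1))
      * (if n + 1 - (n + 1) = 0 then (1:ℝ)
          else -2 * catalan (n + 1 - (n+1) - 1) * b ^ (n + 1 - (n+1)))
      = -2 * (catalan n : ℝ) * a ^ (n+1) := by
    rw [if_neg (by omega), if_pos (by omega)]
    have : n + 1 - 1 = n := by omega
    rw [this]
    ring
  have e6 : (if (0:ℕ) = 0 then (1:ℝ) else -2 * catalan (0 - 1) * a ^ 0)
      * (if n + 1 - 0 = 0 then (1:ℝ)
          else -2 * catalan (n + 1 - 0 - 1) * b ^ (n + 1 - 0))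
      = -2 * (catalan n : ℝ) * b ^ (n+1) := by
    rw [if_pos rfl, if_neg (by omega)]
    have h1 : n + 1 - 0 - 1 = n := by omega
    have h2 : n + 1 - 0 = n + 1 := by omega
    rw [h1, h2]
    ring
  rw [e5, e6] at hc
  have hM : (0:ℝ) ≤ ∑ k ∈ range n,
      4 * ((catalan k : ℝ) * catalan (n - 1 - k)) * (a ^ (k+1) * b ^ (n - k)) := by
    apply Finset.sum_nonneg
    intro k _
    have c1 : (0:ℝ) ≤ (catalan k : ℝ) := Nat.cast_nonneg _
    have c2 : (0:ℝ) ≤ (catalan (n - 1 - k) : ℝ) := Nat.cast_nonneg _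
    have c3 : (0:ℝ) ≤ a ^ (k+1) := pow_nonneg hanna _
    have c4 : (0:ℝ) ≤ b ^ (n-k) := pow_nonneg hbnn _
    positivity
  have hpw : b ^ (n+1) ≤ a ^ (n+1) := pow_le_pow_left₀ hbnn hba (n+1)
  have hmul : (catalan n : ℝ) * b ^ (n+1) ≤ (catalan n : ℝ) * a ^ (n+1) :=
    mul_le_mul_of_nonneg_left hpw (Nat.cast_nonneg _)
  rw [ha] at *
  linarith [hc, hM, hmul]

lemma bt_eq_sum_Vr (S : ℕ → ℕ) (hS0 : S 0 = 1) (h : ℕ) :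
    (bt S h : ℝ) = ∑ n ∈ range (h + 1), Vr S n := by
  induction h with
  | zero => simp [bt, Vr, Vn, hS0]
  | succ m ih =>
    rw [Finset.sum_range_succ, ← ih, bt_succ S hS0 m]
    push_cast
    rfl

lemma cat_ratio (n : ℕ) : (n + 2) * catalan (n + 1) = 2 * (2 * n + 1) * catalan n := by
  have h1 := succ_mul_catalan_eq_centralBinom (n + 1)
  have h2 := Nat.succ_mul_centralBinom_succ n
  have h3 := succ_mul_catalan_eq_centralBinom n
  apply Nat.eq_of_mul_eq_mul_left (show 0 < n + 1 by omega)
  calc (n + 1) * ((n + 2) * catalan (n + 1))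
      = (n + 1) * ((n + 1 + 1) * catalan (n + 1)) := by ring
    _ = (n + 1) * (n + 1).centralBinom := by rw [h1]
    _ = 2 * (2 * n + 1) * n.centralBinom := h2
    _ = 2 * (2 * n + 1) * ((n + 1) * catalan n) := by rw [h3]
    _ = (n + 1) * (2 * (2 * n + 1) * catalan n) := by ring

lemma cat_sq_bound (n : ℕ) : catalan n ^ 2 * (n + 1) ^ 3 ≤ 16 ^ n := by
  induction n with
  | zero => simp
  | succ m ih =>
    have h := cat_ratio m
    have hsq : (m + 2) ^ 2 * catalan (m + 1) ^ 2 = 4 * (2 * m + 1) ^ 2 * catalan m ^ 2 := by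
      calc (m + 2) ^ 2 * catalan (m + 1) ^ 2
          = ((m + 2) * catalan (m + 1)) * ((m + 2) * catalan (m + 1)) := by ring
        _ = (2 * (2 * m + 1) * catalan m) * (2 * (2 * m + 1) * catalan m) := by rw [h]
        _ = 4 * (2 * m + 1) ^ 2 * catalan m ^ 2 := by ring
    have key : catalan (m + 1) ^ 2 * (m + 2) ^ 3 * (m + 1) ^ 3 ≤ 16 ^ (m + 1) * (m + 1) ^ 3 := by
      calc catalan (m + 1) ^ 2 * (m + 2) ^ 3 * (m + 1) ^ 3
          = ((m + 2) ^ 2 * catalan (m + 1) ^ 2) * ((m + 2) * (m + 1) ^ 3) := by ring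
        _ = (4 * (2 * m + 1) ^ 2 * catalan m ^ 2) * ((m + 2) * (m + 1) ^ 3) := by rw [hsq]
        _ = (4 * (2 * m + 1) ^ 2 * (m + 2)) * (catalan m ^ 2 * (m + 1) ^ 3) := by ring
        _ ≤ (4 * (2 * m + 1) ^ 2 * (m + 2)) * 16 ^ m :=
            Nat.mul_le_mul_left _ ih
        _ ≤ (16 * (m + 1) ^ 3) * 16 ^ m := by
            apply Nat.mul_le_mul_right
            nlinarith
        _ = 16 ^ (m + 1) * (m + 1) ^ 3 := by ring
    have hpos : 0 < (m + 1) ^ 3 := by positivity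
    exact Nat.le_of_mul_le_mul_right key hpos

lemma cat_real_bound (n : ℕ) :
    (catalan n : ℝ) * ((n : ℝ) + 1) ^ ((3:ℝ)/2) ≤ 4 ^ n := by
  have hx : (0:ℝ) ≤ (n : ℝ) + 1 := by positivity
  have hsq : (((n : ℝ) + 1) ^ ((3:ℝ)/2)) ^ 2 = ((n : ℝ) + 1) ^ 3 := by
    rw [← Real.rpow_natCast (((n : ℝ) + 1) ^ ((3:ℝ)/2)) 2, ← Real.rpow_mul hx]
    norm_num
  have h1 : ((catalan n : ℝ) * ((n : ℝ) + 1) ^ ((3:ℝ)/2)) ^ 2 ≤ ((4:ℝ) ^ n) ^ 2 := by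
    rw [mul_pow, hsq]
    have := cat_sq_bound n
    have hc : ((catalan n ^ 2 * (n + 1) ^ 3 : ℕ) : ℝ) ≤ ((16 ^ n : ℕ) : ℝ) := Nat.cast_le.mpr this
    push_cast at hc
    calc (catalan n : ℝ) ^ 2 * ((n:ℝ) + 1) ^ 3 ≤ (16:ℝ) ^ n := hc
      _ = ((4:ℝ) ^ n) ^ 2 := by
            rw [← pow_mul, Nat.mul_comm, pow_mul]
            norm_num
  have ha : (0:ℝ) ≤ (catalan n : ℝ) * ((n : ℝ) + 1) ^ ((3:ℝ)/2) := by
    apply mul_nonneg (Nat.cast_nonneg _) (Real.rpow_nonneg hx _)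
  have hb : (0:ℝ) ≤ (4:ℝ) ^ n := by positivity
  nlinarith [h1, ha, hb]

lemma sqrt8_le : Real.sqrt 8 ≤ 4 := by
  nlinarith [Real.sq_sqrt (show (0:ℝ) ≤ 8 by norm_num), Real.sqrt_nonneg 8]

lemma two_rpow_eq : (2:ℝ) ^ ((3:ℝ)/2) = Real.sqrt 8 := by
  have h8 : (8:ℝ) = (2:ℝ) ^ (3:ℝ) := by
    rw [show (3:ℝ) = ((3:ℕ):ℝ) by norm_num, Real.rpow_natCast]
    norm_num
  rw [Real.sqrt_eq_rpow, h8, ← Real.rpow_mul (by norm_num : (0:ℝ) ≤ 2)]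
  norm_num

lemma geom_sum_bound (h : ℕ) :
    ∑ n ∈ range (h + 1), (4 + Real.sqrt 8) ^ n / ((n:ℝ) + 1) ^ ((3:ℝ)/2)
      ≤ 2 * (4 + Real.sqrt 8) ^ h / ((h:ℝ) + 1) ^ ((3:ℝ)/2) := by
  have hRnn : (0:ℝ) ≤ 4 + Real.sqrt 8 := by positivity
  have hQpos : ∀ n : ℕ, (0:ℝ) < ((n:ℝ) + 1) ^ ((3:ℝ)/2) :=
    fun n => Real.rpow_pos_of_pos (by positivity) _
  induction h with
  | zero => simp
  | succ m ih =>
    rw [Finset.sum_range_succ]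
    have step : 2 * (4 + Real.sqrt 8) ^ m / ((m:ℝ) + 1) ^ ((3:ℝ)/2)
        ≤ (4 + Real.sqrt 8) ^ (m + 1) / (((m:ℕ):ℝ) + 1 + 1) ^ ((3:ℝ)/2) := by
      rw [div_le_div_iff₀ (hQpos m) (by positivity)]
      have h1 : (((m:ℕ):ℝ) + 1 + 1) ^ ((3:ℝ)/2) ≤ (2 * ((m:ℝ) + 1)) ^ ((3:ℝ)/2) :=
        Real.rpow_le_rpow (by positivity) (by linarith) (by norm_num)
      have h2 : (2 * ((m:ℝ) + 1)) ^ ((3:ℝ)/2)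
          = Real.sqrt 8 * ((m:ℝ) + 1) ^ ((3:ℝ)/2) := by
        rw [Real.mul_rpow (by norm_num) (by positivity), two_rpow_eq]
      have h4 : (((m:ℕ):ℝ) + 1 + 1) ^ ((3:ℝ)/2) ≤ Real.sqrt 8 * ((m:ℝ) + 1) ^ ((3:ℝ)/2) := by
        rw [← h2]; exact h1
      have hP : (0:ℝ) ≤ (4 + Real.sqrt 8) ^ m := pow_nonneg hRnn m
      have hQ : (0:ℝ) ≤ ((m:ℝ) + 1) ^ ((3:ℝ)/2) := le_of_lt (hQpos m)
      have s1 : 2 * (4 + Real.sqrt 8) ^ m * (((m:ℕ):ℝ) + 1 + 1) ^ ((3:ℝ)/2)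
          ≤ 2 * (4 + Real.sqrt 8) ^ m * (Real.sqrt 8 * ((m:ℝ) + 1) ^ ((3:ℝ)/2)) :=
        mul_le_mul_of_nonneg_left h4 (by positivity)
      have hs8le := sqrt8_le
      have s2 : 2 * (4 + Real.sqrt 8) ^ m * (Real.sqrt 8 * ((m:ℝ) + 1) ^ ((3:ℝ)/2))
          ≤ (4 + Real.sqrt 8) ^ (m + 1) * ((m:ℝ) + 1) ^ ((3:ℝ)/2) := by
        rw [pow_succ]
        nlinarith [mul_nonneg (mul_nonneg (sub_nonneg.mpr hs8le) hP) hQ]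
      calc 2 * (4 + Real.sqrt 8) ^ m * (((m:ℕ):ℝ) + 1 + 1) ^ ((3:ℝ)/2)
          ≤ 2 * (4 + Real.sqrt 8) ^ m * (Real.sqrt 8 * ((m:ℝ) + 1) ^ ((3:ℝ)/2)) := s1
        _ ≤ (4 + Real.sqrt 8) ^ (m + 1) * ((m:ℝ) + 1) ^ ((3:ℝ)/2) := s2
    have hterm : (4 + Real.sqrt 8) ^ (m + 1) / (((m+1:ℕ):ℝ) + 1) ^ ((3:ℝ)/2)
        = (4 + Real.sqrt 8) ^ (m + 1) / (((m:ℕ):ℝ) + 1 + 1) ^ ((3:ℝ)/2) := by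
      push_cast; ring_nf
    calc (∑ n ∈ range (m + 1), (4 + Real.sqrt 8) ^ n / ((n:ℝ) + 1) ^ ((3:ℝ)/2))
          + (4 + Real.sqrt 8) ^ (m + 1) / (((m+1:ℕ):ℝ) + 1) ^ ((3:ℝ)/2)
        ≤ 2 * (4 + Real.sqrt 8) ^ m / ((m:ℝ) + 1) ^ ((3:ℝ)/2)
          + (4 + Real.sqrt 8) ^ (m + 1) / (((m:ℕ):ℝ) + 1 + 1) ^ ((3:ℝ)/2) := by
          rw [hterm] at *
          exact add_le_add ih (le_refl _)
      _ ≤ (4 + Real.sqrt 8) ^ (m + 1) / (((m:ℕ):ℝ) + 1 + 1) ^ ((3:ℝ)/2)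
          + (4 + Real.sqrt 8) ^ (m + 1) / (((m:ℕ):ℝ) + 1 + 1) ^ ((3:ℝ)/2) :=
          add_le_add step (le_refl _)
      _ = 2 * (4 + Real.sqrt 8) ^ (m + 1) / (((m+1:ℕ):ℝ) + 1) ^ ((3:ℝ)/2) := by
          push_cast; ring

theorem superCatalan_binomial_sum_bound (S : ℕ → ℕ) (hS0 : S 0 = 1)
    (hSrec : ∀ n, S (n + 1) + S n = 2 * ∑ i ∈ Finset.range (n + 1), S i * S (n - i)) :
    ∃ C : ℝ, 0 < C ∧ ∀ h : ℕ,
      (∑ k ∈ Finset.range (h + 1), (h.choose k * S k : ℝ)) ≤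
        C * (4 + Real.sqrt 8) ^ (h + 1) / ((h : ℝ) + 1) ^ ((3 : ℝ) / 2) := by
  refine ⟨1, one_pos, ?_⟩
  intro h
  have hs8nn : (0:ℝ) ≤ Real.sqrt 8 := Real.sqrt_nonneg 8
  set R : ℝ := 4 + Real.sqrt 8 with hR
  set a : ℝ := (4 + Real.sqrt 8) / 4 with ha
  have hRnn : (0:ℝ) ≤ R := by rw [hR]; positivity
  have hann : (0:ℝ) ≤ a := by rw [ha]; positivity
  have h4a : 4 * a = R := by rw [ha, hR]; ring
  have hQpos : ∀ n : ℕ, (0:ℝ) < ((n:ℝ) + 1) ^ ((3:ℝ)/2) :=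
    fun n => Real.rpow_pos_of_pos (by positivity) _
  have hlhs : (∑ k ∈ Finset.range (h + 1), (h.choose k * S k : ℝ)) = (bt S h : ℝ) := by
    unfold bt; push_cast; rfl
  rw [hlhs, bt_eq_sum_Vr S hS0]
  have hterm : ∀ n ∈ range (h + 1),
      Vr S n ≤ a * (R ^ n / ((n:ℝ) + 1) ^ ((3:ℝ)/2)) := by
    intro n _
    have h1 := Vr_le S hS0 hSrec n
    have h2 := cat_real_bound n
    have h3 : (catalan n : ℝ) ≤ 4 ^ n / ((n:ℝ) + 1) ^ ((3:ℝ)/2) :=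
      (le_div_iff₀ (hQpos n)).mpr h2
    calc Vr S n ≤ (catalan n : ℝ) * a ^ (n + 1) := h1
      _ ≤ (4 ^ n / ((n:ℝ) + 1) ^ ((3:ℝ)/2)) * a ^ (n + 1) :=
          mul_le_mul_of_nonneg_right h3 (pow_nonneg hann _)
      _ = a * (((4:ℝ) ^ n * a ^ n) / ((n:ℝ) + 1) ^ ((3:ℝ)/2)) := by
          rw [pow_succ]; ring
      _ = a * (R ^ n / ((n:ℝ) + 1) ^ ((3:ℝ)/2)) := by
          rw [← mul_pow, h4a]
  calc ∑ n ∈ range (h + 1), Vr S n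
      ≤ ∑ n ∈ range (h + 1), a * (R ^ n / ((n:ℝ) + 1) ^ ((3:ℝ)/2)) :=
        Finset.sum_le_sum hterm
    _ = a * ∑ n ∈ range (h + 1), R ^ n / ((n:ℝ) + 1) ^ ((3:ℝ)/2) := by
        rw [Finset.mul_sum]
    _ ≤ a * (2 * R ^ h / ((h:ℝ) + 1) ^ ((3:ℝ)/2)) :=
        mul_le_mul_of_nonneg_left (geom_sum_bound h) hann
    _ ≤ 1 * R ^ (h + 1) / ((h:ℝ) + 1) ^ ((3:ℝ)/2) := by
        rw [one_mul]
        have e : a * (2 * R ^ h / ((h:ℝ) + 1) ^ ((3:ℝ)/2))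
            = (2 * a) * R ^ h / ((h:ℝ) + 1) ^ ((3:ℝ)/2) := by ring
        rw [e, pow_succ]
        apply div_le_div_of_nonneg_right ?_ (le_of_lt (hQpos h))
        have h2a : 2 * a ≤ R := by
          rw [ha, hR]
          nlinarith [hs8nn]
        calc 2 * a * R ^ h ≤ R * R ^ h :=
              mul_le_mul_of_nonneg_right h2a (pow_nonneg hRnn h)
          _ = R ^ h * R := by ring
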